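/- In an edge-scalar graph G where each edge e has scalar value KT(e) (the maximum K such that e belongs to a K-truss of G), every maximal α-edge-connected component of G is a K-truss of G with K = α. -/

import Mathlib

variable {V : Type*} [Fintype V]

/-- Two edges (as unordered pairs) share a vertex. -/
def Shares (a b : Sym2 V) : Prop := ∃ w : V, w ∈ a ∧ w ∈ b

/-- \`D\` is a maximal α-edge-connected component of the edge-scalar graph
\`(G, g)\`: a nonempty, edge-connected set of edges of \`G\`, all with scalar ≥ α,
such that every edge of \`G\` outside \`D\` sharing a vertex with an edge of \`D\`
has scalar < α. -/
def IsEdgeMACC (G : SimpleGraph V) (g : Sym2 V → ℝ) (α : ℝ) (D : Set (Sym2 V)) : Prop :=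
  D.Nonempty ∧ D ⊆ G.edgeSet ∧ (∀ e ∈ D, α ≤ g e) ∧
  (∀ e ∈ D, ∀ e' ∈ G.edgeSet, e' ∉ D → Shares e e' → g e' < α) ∧
  (∀ e ∈ D, ∀ e' ∈ D,
    Relation.ReflTransGen (fun a b => a ∈ D ∧ b ∈ D ∧ Shares a b) e e')

/-- Number of triangles of the edge `s(u,v)` within the edge set `D`. -/
noncomputable def triCount (D : Set (Sym2 V)) (u v : V) : ℕ :=
  {w : V | s(u, w) ∈ D ∧ s(v, w) ∈ D}.ncard

/-- `D` is a `K`-truss of `G`: each of its edges participates in at least `K`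
triangles within `D`. -/
def IsKTruss (G : SimpleGraph V) (K : ℕ) (D : Set (Sym2 V)) : Prop :=
  D.Nonempty ∧ D ⊆ G.edgeSet ∧
  ∀ e ∈ D, ∀ u v : V, e = s(u, v) → K ≤ triCount D u v

/-- `KT(e)`: the maximum `K` such that `e` belongs to a `K`-truss of `G`. -/
noncomputable def trussNum (G : SimpleGraph V) (e : Sym2 V) : ℕ :=
  sSup {K : ℕ | ∃ D : Set (Sym2 V), IsKTruss G K D ∧ e ∈ D}

lemma truss_bdd (G : SimpleGraph V) (K : ℕ) (T : Set (Sym2 V)) (hT : IsKTruss G K T) :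
    K ≤ Fintype.card V := by
  obtain ⟨⟨e, he⟩, hsub, htri⟩ := hT
  revert he
  induction e using Sym2.ind with
  | _ u v =>
    intro he
    calc K ≤ triCount T u v := htri _ he u v rfl
    _ ≤ Fintype.card V := by
      have hle : {w : V | s(u, w) ∈ T ∧ s(v, w) ∈ T}.ncard ≤ (Set.univ : Set V).ncard :=
        Set.ncard_le_ncard (Set.subset_univ _) Set.finite_univ
      simpa [triCount, Set.ncard_univ] using hle

lemma le_trussNum (G : SimpleGraph V) {K : ℕ} {T : Set (Sym2 V)} (hT : IsKTruss G K T)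
    {e : Sym2 V} (he : e ∈ T) : K ≤ trussNum G e :=
  le_csSup ⟨Fintype.card V, fun k ⟨T', hT', _⟩ => truss_bdd G k T' hT'⟩ ⟨T, hT, he⟩

/-- With scalar value `KT(e)` on each edge, every maximal α-edge-connected
component is a K-truss with `K = α`. -/
theorem stmt7 (G : SimpleGraph V) (α : ℕ) (D : Set (Sym2 V))
    (h : IsEdgeMACC G (fun e => (trussNum G e : ℝ)) (α : ℝ) D) :
    IsKTruss G α D := by
  obtain ⟨hne, hsub, hge, hmax, -⟩ := h
  refine ⟨hne, hsub, ?_⟩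
  intro e he u v huv
  have hα : α ≤ trussNum G e := by simpa using hge e he
  rcases Nat.eq_zero_or_pos α with h0 | hpos
  · omega
  have hbdd : BddAbove {K : ℕ | ∃ T : Set (Sym2 V), IsKTruss G K T ∧ e ∈ T} :=
    ⟨Fintype.card V, fun k ⟨T, hT, _⟩ => truss_bdd G k T hT⟩
  have hnonempty : {K : ℕ | ∃ T : Set (Sym2 V), IsKTruss G K T ∧ e ∈ T}.Nonempty := by
    by_contra hcon
    rw [Set.not_nonempty_iff_eq_empty] at hcon
    have hz : trussNum G e = 0 := by rw [trussNum, hcon]; exact csSup_empty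
    omega
  have hmem : trussNum G e ∈ {K : ℕ | ∃ T : Set (Sym2 V), IsKTruss G K T ∧ e ∈ T} :=
    Nat.sSup_mem hnonempty hbdd
  obtain ⟨T, hT, heT⟩ := hmem
  have key : ∀ x y : V, s(x, y) ∈ T → x ∈ e → s(x, y) ∈ D := by
    intro x y hxy hx
    by_contra hnot
    have hlt := hmax e he s(x, y) (hT.2.1 hxy) hnot ⟨x, hx, Sym2.mem_mk_left x y⟩
    have h2 : (α : ℝ) ≤ (trussNum G s(x, y) : ℝ) := by
      exact_mod_cast le_trans hα (le_trussNum G hT hxy)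
    simp only at hlt
    linarith
  have hsubset : {w : V | s(u, w) ∈ T ∧ s(v, w) ∈ T} ⊆
      {w : V | s(u, w) ∈ D ∧ s(v, w) ∈ D} := by
    rintro w ⟨h1, h2⟩
    exact ⟨key u w h1 (by rw [huv]; exact Sym2.mem_mk_left u v),
           key v w h2 (by rw [huv]; exact Sym2.mem_mk_right u v)⟩
  calc α ≤ trussNum G e := hα
  _ ≤ triCount T u v := hT.2.2 e heT u v huv
  _ ≤ triCount D u v := Set.ncard_le_ncard hsubset (Set.toFinite _)
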